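/- Let G ≤ S_m, S ≤ G a subgroup, and φ : S → ℂ a nonzero constant function. Then for any α ∈ Γ^m_k and σ, τ ∈ G, either e^φ_{ασ} = e^φ_{ατ} or ⟨e^φ_{ασ}, e^φ_{ατ}⟩ = 0. In particular the orbital subspace V^φ_α(G) = ⟨e^φ_{ασ} : σ ∈ G⟩ has an orthogonal basis of standard symmetrized tensors. -/

import Mathlib

open scoped Classical

noncomputable def esym (m k : ℕ) (S : Finset (Equiv.Perm (Fin m)))
    (φ : Equiv.Perm (Fin m) → ℂ) (α : Fin m → Fin k) : (Fin m → Fin k) → ℂ :=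
  fun β => (φ 1 / (S.card : ℂ)) * ∑ σ ∈ S, if α ∘ ⇑σ⁻¹ = β then φ σ else 0

noncomputable def tip (m k : ℕ) (f g : (Fin m → Fin k) → ℂ) : ℂ :=
  ∑ β : Fin m → Fin k, f β * (starRingEnd ℂ) (g β)

section aux
variable {m k : ℕ} {S : Finset (Equiv.Perm (Fin m))} {φ : Equiv.Perm (Fin m) → ℂ} {c : ℂ}

lemma esym_eq (h1 : (1 : Equiv.Perm (Fin m)) ∈ S) (hφ : ∀ σ ∈ S, φ σ = c)
    (γ β : Fin m → Fin k) :
    esym m k S φ γ β = (c * c / (S.card : ℂ)) *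
      ((S.filter fun s : Equiv.Perm (Fin m) => γ ∘ ⇑s⁻¹ = β).card : ℂ) := by
  unfold esym
  rw [hφ 1 h1]
  have h2 : ∑ σ ∈ S, (if γ ∘ ⇑σ⁻¹ = β then φ σ else 0)
      = ∑ σ ∈ S, (if γ ∘ ⇑σ⁻¹ = β then c else 0) := by
    refine Finset.sum_congr rfl fun s hs => ?_
    split_ifs <;> simp [hφ s hs]
  rw [h2, ← Finset.sum_filter, Finset.sum_const, nsmul_eq_mul]
  ring

lemma esym_ne_iff (h1 : (1 : Equiv.Perm (Fin m)) ∈ S) (hφ : ∀ σ ∈ S, φ σ = c)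
    (hc : c ≠ 0) (γ β : Fin m → Fin k) :
    esym m k S φ γ β ≠ 0 ↔ ∃ s ∈ S, γ ∘ ⇑s⁻¹ = β := by
  have hcard : (S.card : ℂ) ≠ 0 := by
    have := Finset.card_pos.mpr ⟨1, h1⟩
    exact_mod_cast this.ne'
  rw [esym_eq h1 hφ]
  constructor
  · intro h
    have h3 : ((S.filter fun s : Equiv.Perm (Fin m) => γ ∘ ⇑s⁻¹ = β).card : ℂ) ≠ 0 :=
      fun h0 => h (by rw [h0, mul_zero])
    have h4 : (S.filter fun s : Equiv.Perm (Fin m) => γ ∘ ⇑s⁻¹ = β).Nonempty := by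
      rw [← Finset.card_pos]
      by_contra h0
      exact h3 (by rw [Nat.eq_zero_of_not_pos h0, Nat.cast_zero])
    obtain ⟨s, hs⟩ := h4
    rw [Finset.mem_filter] at hs
    exact ⟨s, hs.1, hs.2⟩
  · rintro ⟨s, hs, hsb⟩
    have hne : (S.filter fun s : Equiv.Perm (Fin m) => γ ∘ ⇑s⁻¹ = β).card ≠ 0 := by
      have : 0 < (S.filter fun s : Equiv.Perm (Fin m) => γ ∘ ⇑s⁻¹ = β).card :=
        Finset.card_pos.mpr ⟨s, Finset.mem_filter.mpr ⟨hs, hsb⟩⟩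
      omega
    apply mul_ne_zero
    · exact div_ne_zero (mul_ne_zero hc hc) hcard
    · exact_mod_cast hne

lemma esym_comp (h1 : (1 : Equiv.Perm (Fin m)) ∈ S)
    (hmul : ∀ a ∈ S, ∀ b ∈ S, a * b ∈ S) (hinv : ∀ a ∈ S, a⁻¹ ∈ S)
    (hφ : ∀ σ ∈ S, φ σ = c) {ρ : Equiv.Perm (Fin m)} (hρ : ρ ∈ S)
    (γ : Fin m → Fin k) :
    esym m k S φ (γ ∘ ⇑ρ) = esym m k S φ γ := by
  funext β
  rw [esym_eq h1 hφ, esym_eq h1 hφ]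
  congr 2
  refine Finset.card_bij' (fun s _ => s * ρ⁻¹) (fun u _ => u * ρ) ?_ ?_ ?_ ?_
  · intro s hs
    rw [Finset.mem_filter] at hs ⊢
    refine ⟨hmul s hs.1 ρ⁻¹ (hinv ρ hρ), ?_⟩
    calc γ ∘ ⇑(s * ρ⁻¹)⁻¹ = (γ ∘ ⇑ρ) ∘ ⇑s⁻¹ := by
            ext x; simp [mul_inv_rev, Equiv.Perm.mul_apply]
      _ = β := hs.2
  · intro u hu
    rw [Finset.mem_filter] at hu ⊢
    refine ⟨hmul u hu.1 ρ hρ, ?_⟩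
    calc (γ ∘ ⇑ρ) ∘ ⇑(u * ρ)⁻¹ = γ ∘ ⇑u⁻¹ := by
            ext x; simp [mul_inv_rev, Equiv.Perm.mul_apply]
      _ = β := hu.2
  · intro s _; simp [mul_assoc]
  · intro u _; simp [mul_assoc]
end aux
set_option maxHeartbeats 1000000 in
theorem stmt6 (m k : ℕ) (G : Subgroup (Equiv.Perm (Fin m)))
    (S : Finset (Equiv.Perm (Fin m))) (hSG : ∀ σ ∈ S, σ ∈ G)
    (h1 : (1 : Equiv.Perm (Fin m)) ∈ S)
    (hmul : ∀ a ∈ S, ∀ b ∈ S, a * b ∈ S) (hinv : ∀ a ∈ S, a⁻¹ ∈ S)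
    (φ : Equiv.Perm (Fin m) → ℂ) (c : ℂ) (hc : c ≠ 0) (hφ : ∀ σ ∈ S, φ σ = c)
    (α : Fin m → Fin k) :
    (∀ σ ∈ G, ∀ τ ∈ G,
        esym m k S φ (α ∘ ⇑σ) = esym m k S φ (α ∘ ⇑τ) ∨
          tip m k (esym m k S φ (α ∘ ⇑σ)) (esym m k S φ (α ∘ ⇑τ)) = 0) ∧
    ∃ T : Finset (Equiv.Perm (Fin m)), (∀ σ ∈ T, σ ∈ G) ∧
      (∀ σ ∈ T, ∀ τ ∈ T, σ ≠ τ →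
        tip m k (esym m k S φ (α ∘ ⇑σ)) (esym m k S φ (α ∘ ⇑τ)) = 0) ∧
      LinearIndependent ℂ (fun σ : T => esym m k S φ (α ∘ ⇑(σ : Equiv.Perm (Fin m)))) ∧
      Submodule.span ℂ (Set.range fun σ : T => esym m k S φ (α ∘ ⇑(σ : Equiv.Perm (Fin m)))) =
        Submodule.span ℂ
          {f : (Fin m → Fin k) → ℂ | ∃ σ ∈ G, f = esym m k S φ (α ∘ ⇑σ)} := by
  classical
  set F : Equiv.Perm (Fin m) → (Fin m → Fin k) → ℂ :=
    fun σ => esym m k S φ (α ∘ ⇑σ) with hF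
  -- dichotomy
  have key : ∀ σ τ : Equiv.Perm (Fin m), F σ = F τ ∨ tip m k (F σ) (F τ) = 0 := by
    intro σ τ
    by_cases h : ∃ β, F σ β ≠ 0 ∧ F τ β ≠ 0
    · left
      obtain ⟨β, h₁, h₂⟩ := h
      obtain ⟨π₁, hπ₁, e₁⟩ := (esym_ne_iff h1 hφ hc _ _).mp h₁
      obtain ⟨π₂, hπ₂, e₂⟩ := (esym_ne_iff h1 hφ hc _ _).mp h₂
      have hδ : (α ∘ ⇑τ) = (α ∘ ⇑σ) ∘ ⇑(π₁⁻¹ * π₂) := by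
        have : (α ∘ ⇑σ) ∘ ⇑π₁⁻¹ = (α ∘ ⇑τ) ∘ ⇑π₂⁻¹ := e₁.trans e₂.symm
        funext x
        have := congrFun this (π₂ x)
        simpa [Equiv.Perm.mul_apply] using this.symm
      rw [hF]
      simp only []
      rw [hδ, esym_comp h1 hmul hinv hφ (hmul _ (hinv _ hπ₁) _ hπ₂)]
    · right
      push_neg at h
      unfold tip
      refine Finset.sum_eq_zero fun β _ => ?_
      by_cases hβ : F σ β = 0
      · rw [hβ, zero_mul]
      · rw [h β hβ, map_zero, mul_zero]
  -- each F σ is nonzero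
  have hFne : ∀ σ : Equiv.Perm (Fin m), F σ ≠ 0 := by
    intro σ h0
    have : F σ (α ∘ ⇑σ) ≠ 0 := by
      rw [hF]
      refine (esym_ne_iff h1 hφ hc _ _).mpr ⟨1, h1, ?_⟩
      ext x; simp
    exact this (by rw [h0]; rfl)
  -- tip self nonzero
  have tip_self : ∀ f : (Fin m → Fin k) → ℂ, f ≠ 0 → tip m k f f ≠ 0 := by
    intro f hf
    obtain ⟨β₀, hβ₀⟩ : ∃ β, f β ≠ 0 := by
      by_contra h
      push_neg at h
      exact hf (funext h)
    have h2 : tip m k f f = ((∑ β : Fin m → Fin k, Complex.normSq (f β) : ℝ) : ℂ) := by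
      unfold tip
      push_cast
      exact Finset.sum_congr rfl fun β _ => (Complex.mul_conj (f β))
    rw [h2, Ne, Complex.ofReal_eq_zero]
    have hpos : 0 < ∑ β : Fin m → Fin k, Complex.normSq (f β) :=
      Finset.sum_pos' (fun _ _ => Complex.normSq_nonneg _)
        ⟨β₀, Finset.mem_univ _, Complex.normSq_pos.mpr hβ₀⟩
    exact hpos.ne'
  -- linearity of tip in the first argument over finite sums
  have tip_sum : ∀ {ι : Type} (s : Finset ι) (g : ι → ℂ)
      (v : ι → (Fin m → Fin k) → ℂ) (w : (Fin m → Fin k) → ℂ),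
      tip m k (∑ j ∈ s, g j • v j) w = ∑ j ∈ s, g j * tip m k (v j) w := by
    intro ι s g v w
    unfold tip
    simp only [Finset.sum_apply, Pi.smul_apply, smul_eq_mul, Finset.sum_mul, Finset.mul_sum]
    rw [Finset.sum_comm]
    exact Finset.sum_congr rfl fun j _ => Finset.sum_congr rfl fun β _ => by ring
  constructor
  · intro σ _ τ _; exact key σ τ
  -- construct T
  · set Gf : Finset (Equiv.Perm (Fin m)) := Finset.univ.filter (· ∈ G) with hGf
    obtain ⟨r, hrspec⟩ : ∃ r : ((Fin m → Fin k) → ℂ) → Equiv.Perm (Fin m),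
        ∀ σ ∈ Gf, r (F σ) ∈ Gf ∧ F (r (F σ)) = F σ := by
      refine ⟨fun v => if h : ∃ τ ∈ Gf, F τ = v then h.choose else 1, ?_⟩
      intro σ hσ
      have h : ∃ τ ∈ Gf, F τ = F σ := ⟨σ, hσ, rfl⟩
      simp only [dif_pos h]
      exact ⟨h.choose_spec.1, h.choose_spec.2⟩
    refine ⟨Gf.image (fun σ => r (F σ)), ?_, ?_, ?_, ?_⟩
    · intro σ hσ
      obtain ⟨σ₀, hσ₀, rfl⟩ := Finset.mem_image.mp hσ
      have := (hrspec σ₀ hσ₀).1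
      rw [hGf, Finset.mem_filter] at this
      exact this.2
    · -- pairwise orthogonality
      intro σ hσ τ hτ hne
      rcases key σ τ with heq | h0
      · exfalso
        obtain ⟨σ₀, hσ₀, rfl⟩ := Finset.mem_image.mp hσ
        obtain ⟨τ₀, hτ₀, rfl⟩ := Finset.mem_image.mp hτ
        apply hne
        have e1 : F (r (F σ₀)) = F σ₀ := (hrspec σ₀ hσ₀).2
        have e2 : F (r (F τ₀)) = F τ₀ := (hrspec τ₀ hτ₀).2
        have : F σ₀ = F τ₀ := e1 ▸ e2 ▸ heq
        rw [this]
      · exact h0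
    · -- linear independence
      rw [linearIndependent_iff']
      intro s g hsum i hi
      have horth : ∀ j ∈ s, j ≠ i → tip m k (F (j : Equiv.Perm (Fin m))) (F (i : Equiv.Perm (Fin m))) = 0 := by
        intro j _ hji
        rcases key (j : Equiv.Perm (Fin m)) (i : Equiv.Perm (Fin m)) with heq | h0
        · exfalso
          obtain ⟨σ₀, hσ₀, hj⟩ := Finset.mem_image.mp j.2
          obtain ⟨τ₀, hτ₀, hi'⟩ := Finset.mem_image.mp i.2
          apply hji
          apply Subtype.ext
          rw [← hj, ← hi']
          have e1 : F (r (F σ₀)) = F σ₀ := (hrspec σ₀ hσ₀).2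
          have e2 : F (r (F τ₀)) = F τ₀ := (hrspec τ₀ hτ₀).2
          exact congrArg r (by rw [← e1, ← e2, hj, hi', heq])
        · exact h0
      have happ := congrArg (fun f => tip m k f (F (i : Equiv.Perm (Fin m)))) hsum
      rw [tip_sum] at happ
      have hzero : tip m k (0 : (Fin m → Fin k) → ℂ) (F (i : Equiv.Perm (Fin m))) = 0 := by
        unfold tip
        simp
      rw [hzero] at happ
      rw [Finset.sum_eq_single i (fun j hj hji => by rw [horth j hj hji, mul_zero])
          (fun h => absurd hi h)] at happ
      exact (mul_eq_zero.mp happ).resolve_right (tip_self _ (hFne _))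
    · -- spans are equal
      refine congrArg (Submodule.span ℂ) ?_
      ext f
      constructor
      · rintro ⟨σ, rfl⟩
        obtain ⟨σ₀, hσ₀, hσ⟩ := Finset.mem_image.mp σ.2
        have := (hrspec σ₀ hσ₀).1
        rw [hGf, Finset.mem_filter] at this
        exact ⟨(σ : Equiv.Perm (Fin m)), by rw [← hσ]; exact this.2, rfl⟩
      · rintro ⟨σ, hσG, rfl⟩
        have hσf : σ ∈ Gf := by rw [hGf, Finset.mem_filter]; exact ⟨Finset.mem_univ _, hσG⟩
        refine ⟨⟨r (F σ), Finset.mem_image.mpr ⟨σ, hσf, rfl⟩⟩, ?_⟩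
        exact (hrspec σ hσf).2
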